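/- arXiv:1203.6433 — 7 statements merged into one kernel-verified Lean document; each statement's English description precedes it below -/
import Mathlib

section
/- If s > 1 and c > 0, then there exists a constant C > 0 such that for every positive integer j, the sum over l from 1 to infinity of l^{-s} * (1 + |j - l|)^{-s} is at most C * j^{-s}. -/
open Finset Real

/-- If `s > 1` and `c > 0`, there is `C > 0` such that for all positive
integers `j`, `∑_{l=1}^∞ l^{-s} (1 + |j - l|)^{-s} ≤ C j^{-s}`. -/
theorem stmt_0 (s c : ℝ) (hs : 1 < s) (hc : 0 < c) :
    ∃ C : ℝ, 0 < C ∧ ∀ j : ℕ, 1 ≤ j →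
      (∑' l : ℕ, ((l : ℝ) + 1) ^ (-s) * (1 + |(j : ℝ) - ((l : ℝ) + 1)|) ^ (-s))
        ≤ C * (j : ℝ) ^ (-s) := by
  have hs0 : (0 : ℝ) < s := lt_trans one_pos hs
  have hsneg : -s ≤ 0 := by linarith
  -- summability of the "zeta" series
  have hζsum : Summable (fun n : ℕ => ((n : ℝ) + 1) ^ (-s)) := by
    have h := Real.summable_nat_rpow.2 (show -s < -1 by linarith)
    have h2 := (summable_nat_add_iff 1).2 h
    refine h2.congr fun n => ?_
    push_cast
    ring_nf
  set ζ := ∑' n : ℕ, ((n : ℝ) + 1) ^ (-s) with hζdef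
  have hζpos : 0 < ζ :=
    Summable.tsum_pos hζsum (fun n => Real.rpow_nonneg (by positivity) _) 0
      (Real.rpow_pos_of_pos (by norm_num) _)
  refine ⟨2 ^ s * (3 * ζ), by positivity, fun j hj => ?_⟩
  have hj1 : (1 : ℝ) ≤ (j : ℝ) := by exact_mod_cast hj
  have hjpos : (0 : ℝ) < (j : ℝ) := by linarith
  -- notation
  set g : ℕ → ℝ := fun l => ((l : ℝ) + 1) ^ (-s) with hgdef
  set h : ℕ → ℝ := fun l => (1 + |(j : ℝ) - ((l : ℝ) + 1)|) ^ (-s) with hhdef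
  have hb1 : ∀ l : ℕ, (1 : ℝ) ≤ 1 + |(j : ℝ) - ((l : ℝ) + 1)| := fun l => by
    have := abs_nonneg ((j : ℝ) - ((l : ℝ) + 1)); linarith
  have ha1 : ∀ l : ℕ, (1 : ℝ) ≤ (l : ℝ) + 1 := fun l => by
    have : (0 : ℝ) ≤ (l : ℝ) := Nat.cast_nonneg l; linarith
  have hgnn : ∀ l, 0 ≤ g l := fun l => Real.rpow_nonneg (by positivity) _
  have hhnn : ∀ l, 0 ≤ h l := fun l => Real.rpow_nonneg (by linarith [hb1 l]) _
  have hhle1 : ∀ l, h l ≤ 1 := fun l =>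
    Real.rpow_le_one_of_one_le_of_nonpos (hb1 l) hsneg
  -- summability of h
  have hhtail : ∀ l : ℕ, h (l + j) = ((l : ℝ) + 2) ^ (-s) := by
    intro l
    have : |(j : ℝ) - (((l + j : ℕ) : ℝ) + 1)| = (l : ℝ) + 1 := by
      push_cast
      rw [abs_of_nonpos (by linarith [(Nat.cast_nonneg l : (0:ℝ) ≤ (l:ℝ))])]
      ring
    simp only [hhdef, this]
    rw [show (1:ℝ) + ((l:ℝ) + 1) = (l:ℝ) + 2 by ring]
  have hhsum : Summable h := by
    rw [← summable_nat_add_iff j]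
    refine Summable.of_nonneg_of_le (fun l => hhnn _) (fun l => ?_) hζsum
    rw [hhtail l]
    exact Real.rpow_le_rpow_of_nonpos (by positivity) (by linarith) hsneg
  -- summability of the product
  have hfsum : Summable (fun l : ℕ => g l * h l) := by
    refine Summable.of_nonneg_of_le (fun l => mul_nonneg (hgnn l) (hhnn l)) (fun l => ?_) hζsum
    calc g l * h l ≤ g l * 1 := mul_le_mul_of_nonneg_left (hhle1 l) (hgnn l)
    _ = g l := mul_one _
  -- pointwise bound
  have hpt : ∀ l : ℕ, g l * h l ≤ ((j : ℝ) / 2) ^ (-s) * (g l + h l) := by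
    intro l
    set a : ℝ := (l : ℝ) + 1 with hadef
    set b : ℝ := 1 + |(j : ℝ) - ((l : ℝ) + 1)| with hbdef
    have hapos : 0 < a := by linarith [ha1 l]
    have hbpos : 0 < b := by linarith [hb1 l]
    have hmax : (j : ℝ) / 2 ≤ max a b := by
      rcases le_or_gt ((j : ℝ) / 2) a with hca | hca
      · exact le_max_of_le_left hca
      · refine le_max_of_le_right ?_
        have habs : (j : ℝ) - a ≤ |(j : ℝ) - ((l : ℝ) + 1)| := le_abs_self _
        have : (j : ℝ) / 2 < (j : ℝ) - a := by linarith
        rw [hbdef]; linarith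
    have hmm : min a b * max a b = a * b := min_mul_max a b
    have hprod : (j : ℝ) / 2 * min a b ≤ a * b := by
      rw [← hmm, mul_comm (min a b) (max a b)]
      exact mul_le_mul_of_nonneg_right hmax (le_of_lt (lt_min hapos hbpos))
    have h1 : g l * h l = (a * b) ^ (-s) := by
      rw [hgdef, hhdef, ← Real.mul_rpow hapos.le hbpos.le]
    have h2 : (a * b) ^ (-s) ≤ ((j : ℝ) / 2 * min a b) ^ (-s) :=
      Real.rpow_le_rpow_of_nonpos (by positivity) hprod hsneg
    have h3 : ((j : ℝ) / 2 * min a b) ^ (-s)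
        = ((j : ℝ) / 2) ^ (-s) * (min a b) ^ (-s) :=
      Real.mul_rpow (by positivity) (le_of_lt (lt_min hapos hbpos))
    have h4 : (min a b) ^ (-s) ≤ g l + h l := by
      rcases le_total a b with hab | hab
      · rw [min_eq_left hab]
        have : (0:ℝ) ≤ h l := hhnn l
        simp only [hgdef]; linarith
      · rw [min_eq_right hab]
        have : (0:ℝ) ≤ g l := hgnn l
        simp only [hhdef]; linarith
    calc g l * h l = (a * b) ^ (-s) := h1
      _ ≤ ((j : ℝ) / 2 * min a b) ^ (-s) := h2
      _ = ((j : ℝ) / 2) ^ (-s) * (min a b) ^ (-s) := h3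
      _ ≤ ((j : ℝ) / 2) ^ (-s) * (g l + h l) :=
          mul_le_mul_of_nonneg_left h4 (Real.rpow_nonneg (by positivity) _)
  -- bound for the sum of h
  have hhead : ∑ l ∈ range j, h l ≤ ζ := by
    have hre : ∑ l ∈ range j, h l = ∑ l ∈ range j, ((l : ℝ) + 1) ^ (-s) := by
      rw [← Finset.sum_range_reflect h j]
      refine Finset.sum_congr rfl fun l hl => ?_
      have hlj : l < j := Finset.mem_range.1 hl
      have hcast : ((j - 1 - l : ℕ) : ℝ) = (j : ℝ) - 1 - (l : ℝ) := by
        rw [Nat.sub_sub]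
        have h1l : 1 + l ≤ j := by omega
        push_cast [Nat.cast_sub h1l]
        ring
      simp only [hhdef, hcast]
      have : |(j : ℝ) - ((j : ℝ) - 1 - (l : ℝ) + 1)| = (l : ℝ) := by
        rw [abs_of_nonneg (by linarith [(Nat.cast_nonneg l : (0:ℝ) ≤ (l:ℝ))])]
        ring
      rw [this]
      ring_nf
    rw [hre]
    exact Summable.sum_le_tsum (range j) (fun l _ => Real.rpow_nonneg (by positivity) _) hζsum
  have htail : ∑' l : ℕ, h (l + j) ≤ ζ := by
    refine Summable.tsum_le_tsum (fun l => ?_) ((summable_nat_add_iff j).2 hhsum) hζsum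
    rw [hhtail l]
    exact Real.rpow_le_rpow_of_nonpos (by positivity) (by linarith) hsneg
  have hhbound : ∑' l : ℕ, h l ≤ 2 * ζ := by
    rw [← Summable.sum_add_tsum_nat_add j hhsum]
    linarith
  -- putting it together
  have hmain : (∑' l : ℕ, g l * h l) ≤ ((j : ℝ) / 2) ^ (-s) * (ζ + 2 * ζ) := by
    have hsum2 : Summable (fun l : ℕ => ((j : ℝ) / 2) ^ (-s) * (g l + h l)) :=
      (hζsum.add hhsum).mul_left _
    calc (∑' l : ℕ, g l * h l)
        ≤ ∑' l : ℕ, ((j : ℝ) / 2) ^ (-s) * (g l + h l) :=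
          Summable.tsum_le_tsum hpt hfsum hsum2
      _ = ((j : ℝ) / 2) ^ (-s) * ((∑' l, g l) + ∑' l, h l) := by
          rw [tsum_mul_left, Summable.tsum_add hζsum hhsum]
      _ ≤ ((j : ℝ) / 2) ^ (-s) * (ζ + 2 * ζ) := by
          refine mul_le_mul_of_nonneg_left ?_ (Real.rpow_nonneg (by positivity) _)
          have : (∑' l, g l) = ζ := rfl
          linarith [hhbound]
  have hdiv : ((j : ℝ) / 2) ^ (-s) = 2 ^ s * (j : ℝ) ^ (-s) := by
    rw [Real.div_rpow hjpos.le (by norm_num), Real.rpow_neg (by norm_num : (0:ℝ) ≤ 2)]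
    field_simp
  calc (∑' l : ℕ, ((l : ℝ) + 1) ^ (-s) * (1 + |(j : ℝ) - ((l : ℝ) + 1)|) ^ (-s))
      = ∑' l : ℕ, g l * h l := rfl
    _ ≤ ((j : ℝ) / 2) ^ (-s) * (ζ + 2 * ζ) := hmain
    _ = 2 ^ s * (3 * ζ) * (j : ℝ) ^ (-s) := by rw [hdiv]; ring
end

section
/- Let {ψ_j} be a frame for a separable Hilbert space H with frame operator S, and let f ∈ H satisfy |⟨f, ψ_j⟩| ≤ c j^{-s} for all j and some c > 0, s > 1. Assume the dual frame localization |⟨S^{-1}ψ_j, S^{-1}ψ_l⟩| ≤ c' (1 + |j - l|)^{-s} for all j, l. Then there exists C > 0 such that |⟨f, S^{-1}ψ_j⟩| ≤ C j^{-s} for all j. -/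
set_option maxHeartbeats 1000000

private lemma aux_summable (s : ℝ) (hs : 1 < s) :
    Summable (fun n : ℕ => ((n : ℝ) + 1) ^ (-s)) := by
  have h : Summable (fun n : ℕ => ((n : ℝ)) ^ (-s)) :=
    Real.summable_nat_rpow.mpr (by linarith)
  have := (summable_nat_add_iff 1).mpr h
  simpa using this

private lemma aux_abs_dist (j l : ℕ) : |(j : ℝ) - l| = (Nat.dist j l : ℝ) := by
  rcases le_total l j with h | h
  · rw [Nat.dist_eq_sub_of_le_right h, Nat.cast_sub h,
      abs_of_nonneg (by simp [Nat.cast_le.mpr h] : (0:ℝ) ≤ (j:ℝ) - l)]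
  · rw [Nat.dist_eq_sub_of_le h, Nat.cast_sub h,
      abs_of_nonpos (by simp [Nat.cast_le.mpr h] : (j:ℝ) - l ≤ 0)]
    ring

private lemma aux_conv (s : ℝ) (hs : 1 < s) (j : ℕ) :
    ∑' l : ℕ, ((l : ℝ) + 1) ^ (-s) * ((Nat.dist j l : ℝ) + 1) ^ (-s)
      ≤ (3 * 2 ^ s * ∑' n : ℕ, ((n : ℝ) + 1) ^ (-s)) * ((j : ℝ) + 1) ^ (-s) := by
  set G : ℕ → ℝ := fun n => ((n : ℝ) + 1) ^ (-s) with hGdef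
  have hG0 : ∀ n, 0 ≤ G n := fun n => Real.rpow_nonneg (by positivity) _
  have hGmono : ∀ m n : ℕ, m ≤ n → G n ≤ G m := by
    intro m n h
    exact Real.rpow_le_rpow_of_nonpos (by positivity)
      (by have : (m:ℝ) ≤ n := Nat.cast_le.mpr h; linarith) (by linarith)
  have hGsum : Summable G := aux_summable s hs
  set Z : ℝ := ∑' n : ℕ, G n with hZdef
  have hZ0 : 0 ≤ Z := tsum_nonneg hG0
  -- summability of the shifted term
  have hshift : ∀ k : ℕ, Nat.dist j (k + (j + 1)) = k + 1 := by
    intro k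
    rw [Nat.dist_eq_sub_of_le (by omega)]
    omega
  have hds : Summable (fun l : ℕ => G (Nat.dist j l)) := by
    rw [← summable_nat_add_iff (j + 1)]
    apply Summable.of_nonneg_of_le (fun k => hG0 _) (fun k => ?_) hGsum
    rw [hshift k]
    exact hGmono k (k + 1) (by omega)
  -- bound for the shifted sum
  have hdsum_le : ∑' l : ℕ, G (Nat.dist j l) ≤ 2 * Z := by
    have hsplit := Summable.sum_add_tsum_nat_add (f := fun l : ℕ => G (Nat.dist j l)) (j + 1) hds
    rw [← hsplit]
    have hfin : (∑ i ∈ Finset.range (j + 1), G (Nat.dist j i)) ≤ Z := by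
      have hrefl : (∑ i ∈ Finset.range (j + 1), G (Nat.dist j i))
          = ∑ i ∈ Finset.range (j + 1), G i := by
        rw [← Finset.sum_range_reflect (fun i => G i) (j + 1)]
        apply Finset.sum_congr rfl
        intro i hi
        have hi' : i ≤ j := by simpa [Nat.lt_succ_iff] using Finset.mem_range.mp hi
        congr 1
        rw [Nat.dist_eq_sub_of_le_right hi']
        omega
      rw [hrefl]
      exact Summable.sum_le_tsum _ (fun i _ => hG0 i) hGsum
    have hts : Summable (fun k : ℕ => G (Nat.dist j (k + (j + 1)))) := by
      have heq : (fun k : ℕ => G (Nat.dist j (k + (j + 1)))) = fun k : ℕ => G (k + 1) := by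
        funext k; rw [hshift k]
      rw [heq, summable_nat_add_iff 1]
      exact hGsum
    have hle : ∀ k : ℕ, G (Nat.dist j (k + (j + 1))) ≤ G k := by
      intro k; rw [hshift k]; exact hGmono k (k + 1) (by omega)
    have htail : (∑' k : ℕ, G (Nat.dist j (k + (j + 1)))) ≤ Z :=
      Summable.tsum_le_tsum hle hts hGsum
    linarith
  -- pointwise bound
  have key : ∀ m n : ℕ, (j : ℝ) + 1 ≤ 2 * ((n : ℝ) + 1) →
      G m * G n ≤ 2 ^ s * G j * (G m + G n) := by
    intro m n hmn
    have h1 : G n ≤ 2 ^ s * G j := by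
      have hle : ((j:ℝ) + 1) / 2 ≤ (n:ℝ) + 1 := by linarith
      have h2 : ((n:ℝ) + 1) ^ (-s) ≤ (((j:ℝ) + 1) / 2) ^ (-s) :=
        Real.rpow_le_rpow_of_nonpos (by positivity) hle (by linarith)
      have h3 : (((j:ℝ) + 1) / 2) ^ (-s) = 2 ^ s * G j := by
        rw [Real.div_rpow (by positivity) (by norm_num),
          Real.rpow_neg (by norm_num : (0:ℝ) ≤ 2)]
        have h2s : (0:ℝ) < (2:ℝ) ^ s := Real.rpow_pos_of_pos (by norm_num) s
        field_simp [hGdef]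
        ring
      calc G n ≤ (((j:ℝ) + 1) / 2) ^ (-s) := h2
        _ = 2 ^ s * G j := h3
    nlinarith [hG0 m, hG0 n, hG0 j, mul_le_mul_of_nonneg_left h1 (hG0 m)]
  have hpt : ∀ l : ℕ, G l * G (Nat.dist j l) ≤ 2 ^ s * G j * (G l + G (Nat.dist j l)) := by
    intro l
    have hjd : j ≤ l + Nat.dist j l := by
      simp only [Nat.dist]
      omega
    rcases le_total l (Nat.dist j l) with h | h
    · exact key l (Nat.dist j l) (by
        have h1 : (l:ℝ) ≤ (Nat.dist j l : ℝ) := Nat.cast_le.mpr h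
        have h2 : (j:ℝ) ≤ (l:ℝ) + (Nat.dist j l : ℝ) := by exact_mod_cast Nat.cast_le.mpr hjd
        linarith)
    · have := key (Nat.dist j l) l (by
        have h1 : (Nat.dist j l : ℝ) ≤ (l:ℝ) := Nat.cast_le.mpr h
        have h2 : (j:ℝ) ≤ (l:ℝ) + (Nat.dist j l : ℝ) := by exact_mod_cast Nat.cast_le.mpr hjd
        linarith)
      linarith [this]
  -- summabilities
  have hLHS : Summable (fun l : ℕ => G l * G (Nat.dist j l)) := by
    apply Summable.of_nonneg_of_le (fun l => mul_nonneg (hG0 l) (hG0 _)) (fun l => ?_) hGsum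
    have : G (Nat.dist j l) ≤ G 0 := hGmono 0 _ (Nat.zero_le _)
    have hG0' : G 0 = 1 := by simp [hGdef]
    nlinarith [hG0 l, hG0 (Nat.dist j l)]
  have hRHS : Summable (fun l : ℕ => 2 ^ s * G j * (G l + G (Nat.dist j l))) :=
    (hGsum.add hds).mul_left _
  calc ∑' l : ℕ, G l * G (Nat.dist j l)
      ≤ ∑' l : ℕ, 2 ^ s * G j * (G l + G (Nat.dist j l)) := Summable.tsum_le_tsum hpt hLHS hRHS
    _ = 2 ^ s * G j * (Z + ∑' l : ℕ, G (Nat.dist j l)) := by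
        rw [tsum_mul_left, Summable.tsum_add hGsum hds]
    _ ≤ 2 ^ s * G j * (Z + 2 * Z) := by
        apply mul_le_mul_of_nonneg_left (by linarith)
        positivity
    _ = (3 * 2 ^ s * Z) * G j := by ring

/-- Lemma 3.1: If the frame coefficients of `f` decay like `c j^{-s}` with
`s > 1`, and the dual frame `ψ̃_j = S⁻¹ψ_j` is self-localized with rate `s`, then the dual
frame coefficients `⟨f, ψ̃_j⟩` decay like `C j^{-s}`.  (Indices shifted by one: `ψ j`
represents `ψ_{j+1}`.) -/
theorem stmt_5 {H : Type*} [NormedAddCommGroup H] [InnerProductSpace ℂ H]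
    [CompleteSpace H] [TopologicalSpace.SeparableSpace H]
    (ψ : ℕ → H) (A B : ℝ) (hA : 0 < A) (hB : 0 < B)
    (hsum : ∀ f : H, Summable fun j : ℕ => ‖(inner ℂ (ψ j) f : ℂ)‖ ^ 2)
    (hlow : ∀ f : H, A * ‖f‖ ^ 2 ≤ ∑' j : ℕ, ‖(inner ℂ (ψ j) f : ℂ)‖ ^ 2)
    (hup : ∀ f : H, (∑' j : ℕ, ‖(inner ℂ (ψ j) f : ℂ)‖ ^ 2) ≤ B * ‖f‖ ^ 2)
    (S Sinv : H →L[ℂ] H)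
    (hS : ∀ f : H, HasSum (fun j : ℕ => (inner ℂ (ψ j) f : ℂ) • ψ j) (S f))
    (hSinv₁ : ∀ f, Sinv (S f) = f) (hSinv₂ : ∀ f, S (Sinv f) = f)
    (c c' s : ℝ) (hc : 0 < c) (hc' : 0 < c') (hs : 1 < s)
    (f : H)
    (hdecay : ∀ j : ℕ, ‖(inner ℂ (ψ j) f : ℂ)‖ ≤ c * ((j : ℝ) + 1) ^ (-s))
    (hdual : ∀ j l : ℕ,
      ‖(inner ℂ (Sinv (ψ j)) (Sinv (ψ l)) : ℂ)‖ ≤ c' * (1 + |(j : ℝ) - (l : ℝ)|) ^ (-s)) :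
    ∃ C : ℝ, 0 < C ∧ ∀ j : ℕ, ‖(inner ℂ (Sinv (ψ j)) f : ℂ)‖ ≤ C * ((j : ℝ) + 1) ^ (-s) := by
  set G : ℕ → ℝ := fun n => ((n : ℝ) + 1) ^ (-s) with hGdef
  have hG0 : ∀ n, 0 ≤ G n := fun n => Real.rpow_nonneg (by positivity) _
  have hGsum : Summable G := aux_summable s hs
  set Z : ℝ := ∑' n : ℕ, G n with hZdef
  have hZpos : 0 < Z := by
    have h1 : G 0 ≤ Z := Summable.le_tsum hGsum 0 (fun i _ => hG0 i)
    have h2 : G 0 = 1 := by simp [hGdef]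
    linarith
  refine ⟨c * c' * (3 * 2 ^ s * Z), by positivity, fun j => ?_⟩
  -- expansion of f in the dual frame
  have h1 : HasSum (fun l : ℕ => (inner ℂ (ψ l) f : ℂ) • Sinv (ψ l)) f := by
    have h := Sinv.hasSum (hS f)
    simpa [map_smul, hSinv₁ f] using h
  have h2 : HasSum (fun l : ℕ => (inner ℂ (ψ l) f : ℂ) * (inner ℂ (Sinv (ψ j)) (Sinv (ψ l)) : ℂ))
      ((inner ℂ (Sinv (ψ j)) f : ℂ)) := by
    have h := (innerSL ℂ (Sinv (ψ j))).hasSum h1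
    simpa [inner_smul_right] using h
  -- termwise bound
  have hterm : ∀ l : ℕ, ‖(inner ℂ (ψ l) f : ℂ) * (inner ℂ (Sinv (ψ j)) (Sinv (ψ l)) : ℂ)‖
      ≤ (c * c') * (G l * G (Nat.dist j l)) := by
    intro l
    rw [norm_mul]
    have hd : ‖(inner ℂ (Sinv (ψ j)) (Sinv (ψ l)) : ℂ)‖ ≤ c' * G (Nat.dist j l) := by
      have := hdual j l
      rwa [aux_abs_dist j l, add_comm 1 ((Nat.dist j l : ℝ))] at this
    calc ‖(inner ℂ (ψ l) f : ℂ)‖ * ‖(inner ℂ (Sinv (ψ j)) (Sinv (ψ l)) : ℂ)‖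
        ≤ (c * G l) * (c' * G (Nat.dist j l)) :=
          mul_le_mul (hdecay l) hd (norm_nonneg _) (by positivity)
      _ = (c * c') * (G l * G (Nat.dist j l)) := by ring
    -- done
  have hMsum : Summable (fun l : ℕ => (c * c') * (G l * G (Nat.dist j l))) := by
    apply Summable.mul_left
    apply Summable.of_nonneg_of_le (fun l => mul_nonneg (hG0 l) (hG0 _)) (fun l => ?_) hGsum
    have hmono : G (Nat.dist j l) ≤ G 0 :=
      Real.rpow_le_rpow_of_nonpos (by positivity)
        (by have : (0:ℝ) ≤ (Nat.dist j l : ℝ) := Nat.cast_nonneg _; push_cast; linarith) (by linarith)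
    have hG0' : G 0 = 1 := by simp [hGdef]
    nlinarith [hG0 l, hG0 (Nat.dist j l)]
  have hNsum : Summable (fun l : ℕ =>
      ‖(inner ℂ (ψ l) f : ℂ) * (inner ℂ (Sinv (ψ j)) (Sinv (ψ l)) : ℂ)‖) :=
    Summable.of_nonneg_of_le (fun l => norm_nonneg _) hterm hMsum
  calc ‖(inner ℂ (Sinv (ψ j)) f : ℂ)‖
      = ‖∑' l : ℕ, (inner ℂ (ψ l) f : ℂ) * (inner ℂ (Sinv (ψ j)) (Sinv (ψ l)) : ℂ)‖ := by
        rw [h2.tsum_eq]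
    _ ≤ ∑' l : ℕ, ‖(inner ℂ (ψ l) f : ℂ) * (inner ℂ (Sinv (ψ j)) (Sinv (ψ l)) : ℂ)‖ :=
        norm_tsum_le_tsum_norm hNsum
    _ ≤ ∑' l : ℕ, (c * c') * (G l * G (Nat.dist j l)) := Summable.tsum_le_tsum hterm hNsum hMsum
    _ = (c * c') * ∑' l : ℕ, G l * G (Nat.dist j l) := tsum_mul_left
    _ ≤ (c * c') * ((3 * 2 ^ s * Z) * G j) := by
        apply mul_le_mul_of_nonneg_left (aux_conv s hs j) (by positivity)
    _ = c * c' * (3 * 2 ^ s * Z) * G j := by ring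
end

section
/- Let {ψ_j} be a frame for H with bounds A, B satisfying |⟨ψ_j, ψ_l⟩| ≤ c₀(1+|j-l|)^{-s} with s > 1/2. Let n < m, let H_n = span{ψ_1,…,ψ_n}, P_n the orthogonal projection onto H_n, and suppose the Gram matrix Ψ_n = [⟨ψ_j, ψ_l⟩]_{j,l=1}^n is positive definite with minimal eigenvalue λ_min(Ψ_n) > 0. Define A_{m,n} = c₀²/((2s−1)λ_min(Ψ_n)) · n·(m−n)^{−(2s−1)}. If A_{m,n} < A, then for every g ∈ H_n, Σ_{j=1}^m |⟨g, P_n ψ_j⟩|² ≥ (A − A_{m,n})‖g‖² and Σ_{j=1}^m |⟨g, P_n ψ_j⟩|² ≤ B‖g‖²; that is, {P_n ψ_j}_{j=1}^m is a frame for H_n with bounds A − A_{m,n} and B. -/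
open Real in
lemma aux_step {p x : ℝ} (hp : 0 < p) (hx : 1 ≤ x) :
    p * (x + 1) ^ (-(p + 1)) ≤ x ^ (-p) - (x + 1) ^ (-p) := by
  have hx0 : 0 < x := lt_of_lt_of_le one_pos hx
  obtain ⟨c, hc, hderiv⟩ := exists_hasDerivAt_eq_slope (fun y => y ^ (-p))
    (fun y => (-p) * y ^ (-p - 1)) (by linarith : x < x + 1)
    (continuousOn_id.rpow_const fun y hy => Or.inl (by
      rcases hy with ⟨h1, _⟩; simp only [id_eq]; nlinarith))
    (fun y hy => by
      have : y ≠ 0 := by rcases hy with ⟨h1, _⟩; nlinarith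
      simpa using Real.hasDerivAt_rpow_const (p := -p) (Or.inl this))
  have hc0 : 0 < c := lt_trans hx0 hc.1
  have hslope : x ^ (-p) - (x + 1) ^ (-p) = p * c ^ (-p - 1) := by
    have := hderiv
    simp only [add_sub_cancel_left, div_one] at this
    linarith [this]
  rw [hslope]
  have : (x + 1) ^ (-(p + 1)) ≤ c ^ (-p - 1) := by
    rw [show -(p + 1) = -p - 1 by ring]
    exact Real.rpow_le_rpow_of_nonpos hc0 hc.2.le (by linarith)
  nlinarith

lemma aux_sum {p q : ℝ} (hp : 0 < p) (hq : 2 ≤ q) (N : ℕ) :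
    ∑ k ∈ Finset.range N, ((k : ℝ) + q) ^ (-(p + 1)) ≤ (q - 1) ^ (-p) / p := by
  set f : ℕ → ℝ := fun k => ((k : ℝ) + q - 1) ^ (-p) with hf
  have key : ∀ k ∈ Finset.range N, ((k:ℝ) + q) ^ (-(p+1))
      ≤ (1/p) * (f k - f (k+1)) := by
    intro k _
    have h := aux_step (x := (k:ℝ) + q - 1) hp (by linarith [(Nat.cast_nonneg k : (0:ℝ) ≤ (k:ℝ))])
    have e1 : (k:ℝ) + q - 1 + 1 = (k:ℝ) + q := by ring
    rw [e1] at h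
    have e2 : f (k+1) = ((k:ℝ) + q) ^ (-p) := by
      simp only [hf]
      norm_num
      ring_nf
    have e3 : f k = ((k:ℝ) + q - 1) ^ (-p) := rfl
    rw [e2, e3, one_div, ← div_eq_inv_mul, le_div_iff₀ hp]
    nlinarith [h]
  have hfN : 0 ≤ f N :=
    Real.rpow_nonneg (by nlinarith [(Nat.cast_nonneg N : (0:ℝ) ≤ (N:ℝ))] : (0:ℝ) ≤ (N:ℝ) + q - 1) _
  calc ∑ k ∈ Finset.range N, ((k : ℝ) + q) ^ (-(p + 1))
      ≤ ∑ k ∈ Finset.range N, (1/p) * (f k - f (k+1)) := Finset.sum_le_sum key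
    _ = (1/p) * (f 0 - f N) := by
        rw [← Finset.mul_sum, Finset.sum_range_sub' f]
    _ ≤ (1/p) * f 0 := by
        apply mul_le_mul_of_nonneg_left (by linarith) (by positivity)
    _ = (q - 1) ^ (-p) / p := by
        simp only [hf, Nat.cast_zero, zero_add]
        ring


set_option maxHeartbeats 2000000

/-- Lemma 3.3: if the frame `{ψ_j}` with bounds `A, B` is intrinsically
localized with rate `s > 1/2`, `n < m`, and the Gram matrix of `ψ_1,…,ψ_n` has smallest
eigenvalue `lam > 0` (encoded by the quadratic-form bound `hGram`), and
`A_{m,n} = c₀²/((2s-1) lam) · n (m-n)^{-(2s-1)} < A`, then `{P_n ψ_j}_{j=1}^m` is a frame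
for `H_n = span{ψ_1,…,ψ_n}` with bounds `A - A_{m,n}` and `B`.
(Indices shifted by one: `ψ j` represents `ψ_{j+1}`.) -/
theorem stmt_7 {H : Type*} [NormedAddCommGroup H] [InnerProductSpace ℂ H]
    [CompleteSpace H] [TopologicalSpace.SeparableSpace H]
    (ψ : ℕ → H) (A B : ℝ) (hA : 0 < A) (hB : 0 < B)
    (hsum : ∀ f : H, Summable fun j : ℕ => ‖(inner ℂ (ψ j) f : ℂ)‖ ^ 2)
    (hlow : ∀ f : H, A * ‖f‖ ^ 2 ≤ ∑' j : ℕ, ‖(inner ℂ (ψ j) f : ℂ)‖ ^ 2)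
    (hup : ∀ f : H, (∑' j : ℕ, ‖(inner ℂ (ψ j) f : ℂ)‖ ^ 2) ≤ B * ‖f‖ ^ 2)
    (c₀ s : ℝ) (hc₀ : 0 < c₀) (hs : 1 / 2 < s)
    (hloc : ∀ j l : ℕ,
      ‖(inner ℂ (ψ j) (ψ l) : ℂ)‖ ≤ c₀ * (1 + |(j : ℝ) - (l : ℝ)|) ^ (-s))
    (n m : ℕ) (hn : 1 ≤ n) (hnm : n < m)
    (lam : ℝ) (hlam : 0 < lam)
    (hGram : ∀ a : Fin n → ℂ,
      lam * ∑ i, ‖a i‖ ^ 2 ≤ ‖∑ i : Fin n, a i • ψ (i : ℕ)‖ ^ 2)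
    (P : H → H)
    (hPmem : ∀ g, P g ∈ Submodule.span ℂ (ψ '' {i | i < n}))
    (hPorth : ∀ g, ∀ h ∈ Submodule.span ℂ (ψ '' {i | i < n}),
      (inner ℂ (g - P g) h : ℂ) = 0)
    (hAmn : c₀ ^ 2 / ((2 * s - 1) * lam) * (n : ℝ) * ((m : ℝ) - (n : ℝ)) ^ (-(2 * s - 1))
      < A) :
    ∀ g ∈ Submodule.span ℂ (ψ '' {i | i < n}),
      (A - c₀ ^ 2 / ((2 * s - 1) * lam) * (n : ℝ)
          * ((m : ℝ) - (n : ℝ)) ^ (-(2 * s - 1))) * ‖g‖ ^ 2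
        ≤ ∑ j ∈ Finset.range m, ‖(inner ℂ (P (ψ j)) g : ℂ)‖ ^ 2
      ∧ (∑ j ∈ Finset.range m, ‖(inner ℂ (P (ψ j)) g : ℂ)‖ ^ 2) ≤ B * ‖g‖ ^ 2 := by
  intro g hg
  have hinner : ∀ j, (inner ℂ (P (ψ j)) g : ℂ) = inner ℂ (ψ j) g := by
    intro j
    have h0 := hPorth (ψ j) g hg
    rw [inner_sub_left, sub_eq_zero] at h0
    exact h0.symm
  simp only [hinner]
  -- the upper bound
  have hupper : (∑ j ∈ Finset.range m, ‖(inner ℂ (ψ j) g : ℂ)‖ ^ 2) ≤ B * ‖g‖ ^ 2 := by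
    refine le_trans ?_ (hup g)
    exact Summable.sum_le_tsum _ (fun j _ => sq_nonneg _) (hsum g)
  refine ⟨?_, hupper⟩
  -- representation of g
  have hrange : ψ '' {i | i < n} = Set.range (fun i : Fin n => ψ (i : ℕ)) := by
    ext x
    constructor
    · rintro ⟨i, hi, rfl⟩; exact ⟨⟨i, hi⟩, rfl⟩
    · rintro ⟨i, rfl⟩; exact ⟨(i : ℕ), i.2, rfl⟩
  rw [hrange] at hg
  obtain ⟨a, ha⟩ := (Submodule.mem_span_range_iff_exists_fun ℂ).mp hg
  set Sa : ℝ := ∑ i : Fin n, ‖a i‖ ^ 2 with hSa_def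
  have hSa : lam * Sa ≤ ‖g‖ ^ 2 := by
    have := hGram a
    rwa [ha] at this
  set p : ℝ := 2 * s - 1 with hp_def
  have hp : 0 < p := by simp only [hp_def]; linarith
  set q : ℝ := (m : ℝ) - (n : ℝ) + 2 with hq_def
  have hmn : (1 : ℝ) ≤ (m : ℝ) - (n : ℝ) := by
    have : (n : ℝ) + 1 ≤ (m : ℝ) := by exact_mod_cast hnm
    linarith
  have hq : 2 ≤ q := by simp only [hq_def]; linarith
  -- per-term tail bound
  have hterm : ∀ k : ℕ, ‖(inner ℂ (ψ (k + m)) g : ℂ)‖ ^ 2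
      ≤ Sa * ((n : ℝ) * (c₀ ^ 2 * ((k : ℝ) + q) ^ (-(p + 1)))) := by
    intro k
    set j := k + m with hj
    have hnj : (n : ℝ) ≤ (j : ℝ) := by
      have : n ≤ j := le_trans hnm.le (Nat.le_add_left m k)
      exact_mod_cast this
    have hjq : (j : ℝ) - (n : ℝ) + 2 = (k : ℝ) + q := by
      simp only [hj, hq_def]; push_cast; ring
    have hpos : (0 : ℝ) < (j : ℝ) - (n : ℝ) + 2 := by linarith
    have hji : ∀ i : Fin n, ‖(inner ℂ (ψ j) (ψ (i : ℕ)) : ℂ)‖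
        ≤ c₀ * ((j : ℝ) - (n : ℝ) + 2) ^ (-s) := by
      intro i
      refine (hloc j i).trans ?_
      have hi : ((i : ℕ) : ℝ) ≤ (n : ℝ) - 1 := by
        have h2 : ((i : ℕ) : ℝ) + 1 ≤ (n : ℝ) := by exact_mod_cast i.2
        linarith
      have hbase : (j : ℝ) - (n : ℝ) + 2 ≤ 1 + |(j : ℝ) - ((i : ℕ) : ℝ)| := by
        rw [abs_of_nonneg (by linarith)]
        linarith
      exact mul_le_mul_of_nonneg_left
        (Real.rpow_le_rpow_of_nonpos hpos hbase (by linarith)) hc₀.le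
    have hrep : (inner ℂ (ψ j) g : ℂ) = ∑ i : Fin n, a i * inner ℂ (ψ j) (ψ (i : ℕ)) := by
      rw [← ha, inner_sum]
      simp [inner_smul_right]
    have h1 : ‖(inner ℂ (ψ j) g : ℂ)‖
        ≤ ∑ i : Fin n, ‖a i‖ * ‖(inner ℂ (ψ j) (ψ (i : ℕ)) : ℂ)‖ := by
      rw [hrep]
      refine (norm_sum_le _ _).trans_eq ?_
      simp [norm_mul]
    have h2 : ‖(inner ℂ (ψ j) g : ℂ)‖ ^ 2
        ≤ Sa * ∑ i : Fin n, ‖(inner ℂ (ψ j) (ψ (i : ℕ)) : ℂ)‖ ^ 2 := by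
      calc ‖(inner ℂ (ψ j) g : ℂ)‖ ^ 2
          ≤ (∑ i : Fin n, ‖a i‖ * ‖(inner ℂ (ψ j) (ψ (i : ℕ)) : ℂ)‖) ^ 2 :=
            pow_le_pow_left₀ (norm_nonneg _) h1 2
        _ ≤ Sa * ∑ i : Fin n, ‖(inner ℂ (ψ j) (ψ (i : ℕ)) : ℂ)‖ ^ 2 :=
            Finset.sum_mul_sq_le_sq_mul_sq _ _ _
    have hsq : (c₀ * ((j : ℝ) - (n : ℝ) + 2) ^ (-s)) ^ 2
        = c₀ ^ 2 * ((k : ℝ) + q) ^ (-(p + 1)) := by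
      rw [mul_pow, hjq, ← Real.rpow_natCast (((k : ℝ) + q) ^ (-s)) 2,
        ← Real.rpow_mul (by linarith : (0:ℝ) ≤ (k : ℝ) + q)]
      congr 1
      push_cast
      congr 1
      simp only [hp_def]; ring
    have h3 : ∑ i : Fin n, ‖(inner ℂ (ψ j) (ψ (i : ℕ)) : ℂ)‖ ^ 2
        ≤ (n : ℝ) * (c₀ ^ 2 * ((k : ℝ) + q) ^ (-(p + 1))) := by
      calc ∑ i : Fin n, ‖(inner ℂ (ψ j) (ψ (i : ℕ)) : ℂ)‖ ^ 2
          ≤ ∑ _i : Fin n, c₀ ^ 2 * ((k : ℝ) + q) ^ (-(p + 1)) := by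
            refine Finset.sum_le_sum fun i _ => ?_
            rw [← hsq]
            exact pow_le_pow_left₀ (norm_nonneg _) (hji i) 2
        _ = (n : ℝ) * (c₀ ^ 2 * ((k : ℝ) + q) ^ (-(p + 1))) := by
            simp [Finset.sum_const, Finset.card_univ]
    have hSa0 : (0 : ℝ) ≤ Sa := Finset.sum_nonneg fun i _ => sq_nonneg _
    exact h2.trans (mul_le_mul_of_nonneg_left h3 hSa0)
  -- tail bound
  have htail_sum : Summable (fun k : ℕ => ‖(inner ℂ (ψ (k + m)) g : ℂ)‖ ^ 2) :=
    (summable_nat_add_iff m).mpr (hsum g)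
  have htail : (∑' k : ℕ, ‖(inner ℂ (ψ (k + m)) g : ℂ)‖ ^ 2)
      ≤ Sa * ((n : ℝ) * c₀ ^ 2 * ((q - 1) ^ (-p) / p)) := by
    have hSa0 : (0 : ℝ) ≤ Sa := Finset.sum_nonneg fun i _ => sq_nonneg _
    refine Summable.tsum_le_of_sum_le htail_sum fun F => ?_
    obtain ⟨N, hFN⟩ := F.exists_nat_subset_range
    calc ∑ k ∈ F, ‖(inner ℂ (ψ (k + m)) g : ℂ)‖ ^ 2
        ≤ ∑ k ∈ F, Sa * ((n : ℝ) * (c₀ ^ 2 * ((k : ℝ) + q) ^ (-(p + 1)))) :=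
          Finset.sum_le_sum fun k _ => hterm k
      _ ≤ ∑ k ∈ Finset.range N, Sa * ((n : ℝ) * (c₀ ^ 2 * ((k : ℝ) + q) ^ (-(p + 1)))) := by
          refine Finset.sum_le_sum_of_subset_of_nonneg hFN fun k _ _ => ?_
          have : (0:ℝ) ≤ ((k : ℝ) + q) ^ (-(p + 1)) :=
            Real.rpow_nonneg (by positivity) _
          positivity
      _ = Sa * ((n : ℝ) * c₀ ^ 2) * ∑ k ∈ Finset.range N, ((k : ℝ) + q) ^ (-(p + 1)) := by
          rw [Finset.mul_sum]
          exact Finset.sum_congr rfl fun k _ => by ring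
      _ ≤ Sa * ((n : ℝ) * c₀ ^ 2) * ((q - 1) ^ (-p) / p) := by
          refine mul_le_mul_of_nonneg_left (aux_sum hp hq N) ?_
          positivity
      _ = Sa * ((n : ℝ) * c₀ ^ 2 * ((q - 1) ^ (-p) / p)) := by ring
  -- assembly
  have hsplit := Summable.sum_add_tsum_nat_add m (hsum g)
  have hlow' := hlow g
  have hchain : Sa * ((n : ℝ) * c₀ ^ 2 * ((q - 1) ^ (-p) / p))
      ≤ c₀ ^ 2 / ((2 * s - 1) * lam) * (n : ℝ)
        * ((m : ℝ) - (n : ℝ)) ^ (-(2 * s - 1)) * ‖g‖ ^ 2 := by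
    have hSa0 : (0 : ℝ) ≤ Sa := Finset.sum_nonneg fun i _ => sq_nonneg _
    have hSa' : Sa ≤ ‖g‖ ^ 2 / lam := by
      rw [le_div_iff₀ hlam]
      rwa [mul_comm] at hSa
    have hq1 : (q - 1) ^ (-p) ≤ ((m : ℝ) - (n : ℝ)) ^ (-p) :=
      Real.rpow_le_rpow_of_nonpos (by linarith) (by simp only [hq_def]; linarith)
        (by linarith)
    have hX0 : (0 : ℝ) ≤ ((m : ℝ) - (n : ℝ)) ^ (-p) := Real.rpow_nonneg (by linarith) _
    have hQ0 : (0 : ℝ) ≤ (q - 1) ^ (-p) := Real.rpow_nonneg (by linarith) _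
    have h1 : Sa * ((n : ℝ) * c₀ ^ 2 * ((q - 1) ^ (-p) / p))
        ≤ (‖g‖ ^ 2 / lam) * ((n : ℝ) * c₀ ^ 2 * (((m : ℝ) - (n : ℝ)) ^ (-p) / p)) := by
      refine mul_le_mul hSa' ?_ ?_ (by positivity)
      · refine mul_le_mul_of_nonneg_left ?_ (by positivity)
        exact div_le_div_of_nonneg_right hq1 hp.le
      · positivity
    refine h1.trans (le_of_eq ?_)
    rw [hp_def]
    field_simp
  rw [← hsplit] at hlow'
  linarith [htail, hchain]
end

section
/- With the same setup as Lemma 4.1, if B_{m,n} < A then {Q_n ψ_j}_{j=1}^m is a frame for G_n with bounds A − B_{m,n} and B, with frame operator W_n, and ‖W_n^{-1}‖ ≤ 1/(A − B_{m,n}). -/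
/-- Lemma 4.2: if `B_{m,n} < A` then `{Q_n ψ_j}_{j=1}^m` is a frame for
`G_n = span{φ_1,…,φ_n}` with bounds `A - B_{m,n}`, `B`, with frame operator
`W_n = Q_n S_m |_{G_n}`, which is invertible on `G_n` with `‖W_n⁻¹‖ ≤ 1/(A - B_{m,n})`.
(Indices shifted by one: `ψ j`, `φ j` represent `ψ_{j+1}`, `φ_{j+1}`.) -/
theorem stmt_10 {H : Type*} [NormedAddCommGroup H] [InnerProductSpace ℂ H]
    [CompleteSpace H] [TopologicalSpace.SeparableSpace H]
    (ψ φ : ℕ → H) (A B : ℝ) (hA : 0 < A) (hB : 0 < B)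
    (hsum : ∀ f : H, Summable fun j : ℕ => ‖(inner ℂ (ψ j) f : ℂ)‖ ^ 2)
    (hlow : ∀ f : H, A * ‖f‖ ^ 2 ≤ ∑' j : ℕ, ‖(inner ℂ (ψ j) f : ℂ)‖ ^ 2)
    (hup : ∀ f : H, (∑' j : ℕ, ‖(inner ℂ (ψ j) f : ℂ)‖ ^ 2) ≤ B * ‖f‖ ^ 2)
    (n m : ℕ) (hnm : n < m)
    (lam : ℝ) (hlam : 0 < lam)
    (hGram : ∀ a : Fin n → ℂ,
      lam * ∑ i, ‖a i‖ ^ 2 ≤ ‖∑ i : Fin n, a i • φ (i : ℕ)‖ ^ 2)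
    (Q : H → H)
    (hQmem : ∀ g, Q g ∈ Submodule.span ℂ (φ '' {i | i < n}))
    (hQorth : ∀ g, ∀ h ∈ Submodule.span ℂ (φ '' {i | i < n}),
      (inner ℂ (g - Q g) h : ℂ) = 0)
    (hBsum : Summable fun j : ℕ => ∑ l ∈ Finset.range n,
      ‖(inner ℂ (ψ (m + j)) (φ l) : ℂ)‖ ^ 2)
    (hBmn : ((1 / lam) * ∑' j : ℕ, ∑ l ∈ Finset.range n,
        ‖(inner ℂ (ψ (m + j)) (φ l) : ℂ)‖ ^ 2) < A) :
    (∀ g ∈ Submodule.span ℂ (φ '' {i | i < n}),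
      (A - (1 / lam) * ∑' j : ℕ, ∑ l ∈ Finset.range n,
          ‖(inner ℂ (ψ (m + j)) (φ l) : ℂ)‖ ^ 2) * ‖g‖ ^ 2
        ≤ ∑ j ∈ Finset.range m, ‖(inner ℂ (Q (ψ j)) g : ℂ)‖ ^ 2
      ∧ (∑ j ∈ Finset.range m, ‖(inner ℂ (Q (ψ j)) g : ℂ)‖ ^ 2) ≤ B * ‖g‖ ^ 2)
    ∧ (∀ g ∈ Submodule.span ℂ (φ '' {i | i < n}),
        (∑ j ∈ Finset.range m, (inner ℂ (Q (ψ j)) g : ℂ) • Q (ψ j))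
          = Q (∑ j ∈ Finset.range m, (inner ℂ (ψ j) g : ℂ) • ψ j))
    ∧ (∀ h ∈ Submodule.span ℂ (φ '' {i | i < n}),
        ∃! g : H, g ∈ Submodule.span ℂ (φ '' {i | i < n}) ∧
          Q (∑ j ∈ Finset.range m, (inner ℂ (ψ j) g : ℂ) • ψ j) = h)
    ∧ (∀ g ∈ Submodule.span ℂ (φ '' {i | i < n}),
        (A - (1 / lam) * ∑' j : ℕ, ∑ l ∈ Finset.range n,
            ‖(inner ℂ (ψ (m + j)) (φ l) : ℂ)‖ ^ 2) * ‖g‖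
          ≤ ‖Q (∑ j ∈ Finset.range m, (inner ℂ (ψ j) g : ℂ) • ψ j)‖) := by
  set G : Submodule ℂ H := Submodule.span ℂ (φ '' {i | i < n}) with hGdef
  set T : ℝ := ∑' j : ℕ, ∑ l ∈ Finset.range n, ‖(inner ℂ (ψ (m + j)) (φ l) : ℂ)‖ ^ 2 with hTdef
  have hTnn : 0 ≤ T := tsum_nonneg fun j => Finset.sum_nonneg fun l _ => by positivity
  set c : ℝ := A - (1 / lam) * T with hcdef
  have hc : 0 < c := by simp only [hcdef]; linarith
  have hGfin : FiniteDimensional ℂ G :=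
    FiniteDimensional.span_of_finite ℂ ((Set.finite_Iio n).image φ)
  -- range form of the span
  have himg : φ '' {i | i < n} = Set.range (fun i : Fin n => φ (i : ℕ)) := by
    ext x
    constructor
    · rintro ⟨i, hi, rfl⟩; exact ⟨⟨i, hi⟩, rfl⟩
    · rintro ⟨i, rfl⟩; exact ⟨(i : ℕ), i.2, rfl⟩
  -- Q is the orthogonal projection
  have hQ : ∀ u, Q u = (G.orthogonalProjectionOnto u : H) := fun u =>
    (Submodule.eq_starProjection_of_mem_of_inner_eq_zero (hQmem u)
      (fun w hw => hQorth u w hw)).symm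
  -- F2
  have hF2 : ∀ (j : ℕ) (g : H), g ∈ G → (inner ℂ (Q (ψ j)) g : ℂ) = inner ℂ (ψ j) g := by
    intro j g hg
    have h0 := hQorth (ψ j) g hg
    rw [inner_sub_left, sub_eq_zero] at h0
    exact h0.symm
  -- tail bound
  have htail : ∀ g ∈ G, (∑' j : ℕ, ‖(inner ℂ (ψ (m + j)) g : ℂ)‖ ^ 2) ≤ (1 / lam) * T * ‖g‖ ^ 2 := by
    intro g hg
    rw [hGdef, himg, Submodule.mem_span_range_iff_exists_fun] at hg
    obtain ⟨a, rfl⟩ := hg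
    set K : ℝ := ∑ i : Fin n, ‖a i‖ ^ 2 with hKdef
    have hKnn : 0 ≤ K := Finset.sum_nonneg fun i _ => by positivity
    have hK : lam * K ≤ ‖∑ i : Fin n, a i • φ (i : ℕ)‖ ^ 2 := hGram a
    have hper : ∀ j : ℕ, ‖(inner ℂ (ψ (m + j)) (∑ i : Fin n, a i • φ (i : ℕ)) : ℂ)‖ ^ 2
        ≤ K * ∑ l ∈ Finset.range n, ‖(inner ℂ (ψ (m + j)) (φ l) : ℂ)‖ ^ 2 := by
      intro j
      have h1 : (inner ℂ (ψ (m + j)) (∑ i : Fin n, a i • φ (i : ℕ)) : ℂ)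
          = ∑ i : Fin n, a i * inner ℂ (ψ (m + j)) (φ (i : ℕ)) := by
        rw [inner_sum]; simp [inner_smul_right]
      have h2 : ‖(inner ℂ (ψ (m + j)) (∑ i : Fin n, a i • φ (i : ℕ)) : ℂ)‖
          ≤ ∑ i : Fin n, ‖a i‖ * ‖(inner ℂ (ψ (m + j)) (φ (i : ℕ)) : ℂ)‖ := by
        rw [h1]
        refine (norm_sum_le _ _).trans_eq ?_
        simp [norm_mul]
      have h3 : (∑ i : Fin n, ‖a i‖ * ‖(inner ℂ (ψ (m + j)) (φ (i : ℕ)) : ℂ)‖) ^ 2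
          ≤ K * ∑ i : Fin n, ‖(inner ℂ (ψ (m + j)) (φ (i : ℕ)) : ℂ)‖ ^ 2 :=
        Finset.sum_mul_sq_le_sq_mul_sq _ _ _
      have h4 : (∑ i : Fin n, ‖(inner ℂ (ψ (m + j)) (φ (i : ℕ)) : ℂ)‖ ^ 2)
          = ∑ l ∈ Finset.range n, ‖(inner ℂ (ψ (m + j)) (φ l) : ℂ)‖ ^ 2 :=
        Fin.sum_univ_eq_sum_range (fun l => ‖(inner ℂ (ψ (m + j)) (φ l) : ℂ)‖ ^ 2) n
      calc ‖(inner ℂ (ψ (m + j)) (∑ i : Fin n, a i • φ (i : ℕ)) : ℂ)‖ ^ 2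
          ≤ (∑ i : Fin n, ‖a i‖ * ‖(inner ℂ (ψ (m + j)) (φ (i : ℕ)) : ℂ)‖) ^ 2 := by
            apply pow_le_pow_left₀ (norm_nonneg _) h2
        _ ≤ K * ∑ l ∈ Finset.range n, ‖(inner ℂ (ψ (m + j)) (φ l) : ℂ)‖ ^ 2 := by rw [← h4]; exact h3
    set g := ∑ i : Fin n, a i • φ (i : ℕ)
    have hsum1 : Summable fun j : ℕ => ‖(inner ℂ (ψ (m + j)) g : ℂ)‖ ^ 2 :=
      (hsum g).comp_injective (add_right_injective m)
    calc (∑' j : ℕ, ‖(inner ℂ (ψ (m + j)) g : ℂ)‖ ^ 2)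
        ≤ ∑' j : ℕ, K * ∑ l ∈ Finset.range n, ‖(inner ℂ (ψ (m + j)) (φ l) : ℂ)‖ ^ 2 :=
          Summable.tsum_le_tsum hper hsum1 (hBsum.mul_left K)
      _ = K * T := by rw [tsum_mul_left]
      _ ≤ (1 / lam) * T * ‖g‖ ^ 2 := by
          have : K ≤ (1 / lam) * ‖g‖ ^ 2 := by
            rw [div_mul_eq_mul_div, le_div_iff₀ hlam]; linarith [hGram a]
          nlinarith [hTnn, hKnn, norm_nonneg g]
  -- lower and upper bounds for the partial sum, in terms of ψ
  have hlow' : ∀ g ∈ G, c * ‖g‖ ^ 2 ≤ ∑ j ∈ Finset.range m, ‖(inner ℂ (ψ j) g : ℂ)‖ ^ 2 := by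
    intro g hg
    have hsplit : (∑ j ∈ Finset.range m, ‖(inner ℂ (ψ j) g : ℂ)‖ ^ 2)
        + ∑' j : ℕ, ‖(inner ℂ (ψ (j + m)) g : ℂ)‖ ^ 2
        = ∑' j : ℕ, ‖(inner ℂ (ψ j) g : ℂ)‖ ^ 2 := Summable.sum_add_tsum_nat_add m (hsum g)
    have ht := htail g hg
    have ht' : (∑' j : ℕ, ‖(inner ℂ (ψ (j + m)) g : ℂ)‖ ^ 2) ≤ (1 / lam) * T * ‖g‖ ^ 2 := by
      have : (fun j : ℕ => ‖(inner ℂ (ψ (j + m)) g : ℂ)‖ ^ 2)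
          = fun j : ℕ => ‖(inner ℂ (ψ (m + j)) g : ℂ)‖ ^ 2 := by
        funext j; rw [add_comm]
      rw [this]; exact ht
    have := hlow g
    simp only [hcdef]
    linarith
  have hup' : ∀ g : H, (∑ j ∈ Finset.range m, ‖(inner ℂ (ψ j) g : ℂ)‖ ^ 2) ≤ B * ‖g‖ ^ 2 := by
    intro g
    exact le_trans (Summable.sum_le_tsum (Finset.range m) (fun i _ => by positivity) (hsum g)) (hup g)
  -- rewriting partial sums with Q ψ j
  have hsumeq : ∀ g ∈ G, (∑ j ∈ Finset.range m, ‖(inner ℂ (Q (ψ j)) g : ℂ)‖ ^ 2)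
      = ∑ j ∈ Finset.range m, ‖(inner ℂ (ψ j) g : ℂ)‖ ^ 2 := by
    intro g hg
    exact Finset.sum_congr rfl fun j _ => by rw [hF2 j g hg]
  -- Part 2
  have hpart2 : ∀ g ∈ G, (∑ j ∈ Finset.range m, (inner ℂ (Q (ψ j)) g : ℂ) • Q (ψ j))
      = Q (∑ j ∈ Finset.range m, (inner ℂ (ψ j) g : ℂ) • ψ j) := by
    intro g hg
    have : Q (∑ j ∈ Finset.range m, (inner ℂ (ψ j) g : ℂ) • ψ j)
        = ∑ j ∈ Finset.range m, (inner ℂ (ψ j) g : ℂ) • Q (ψ j) := by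
      rw [hQ]
      rw [map_sum]
      push_cast [Submodule.coe_sum]
      exact Finset.sum_congr rfl fun j _ => by
        rw [map_smul]; simp [hQ]
    rw [this]
    exact Finset.sum_congr rfl fun j _ => by rw [hF2 j g hg]
  -- Part 4
  have hpart4 : ∀ g ∈ G, c * ‖g‖ ≤ ‖Q (∑ j ∈ Finset.range m, (inner ℂ (ψ j) g : ℂ) • ψ j)‖ := by
    intro g hg
    set W := Q (∑ j ∈ Finset.range m, (inner ℂ (ψ j) g : ℂ) • ψ j) with hWdef
    have hinner : (inner ℂ W g : ℂ) = ((∑ j ∈ Finset.range m, ‖(inner ℂ (ψ j) g : ℂ)‖ ^ 2 : ℝ) : ℂ) := by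
      rw [hWdef, ← hpart2 g hg, sum_inner]
      push_cast
      refine Finset.sum_congr rfl fun j _ => ?_
      rw [inner_smul_left, hF2 j g hg, RCLike.conj_mul]
      norm_cast
    have h1 : c * ‖g‖ ^ 2 ≤ (inner ℂ W g : ℂ).re := by
      rw [hinner, Complex.ofReal_re]
      exact hlow' g hg
    have h2 : (inner ℂ W g : ℂ).re ≤ ‖W‖ * ‖g‖ := by
      calc (inner ℂ W g : ℂ).re ≤ ‖(inner ℂ W g : ℂ)‖ := Complex.re_le_norm _
        _ ≤ ‖W‖ * ‖g‖ := norm_inner_le_norm _ _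
    rcases eq_or_ne g 0 with rfl | hg0
    · simp
    · have hgn : 0 < ‖g‖ := norm_pos_iff.mpr hg0
      have : c * ‖g‖ * ‖g‖ ≤ ‖W‖ * ‖g‖ := by nlinarith
      exact le_of_mul_le_mul_right this hgn
  -- Part 3
  have hpart3 : ∀ h ∈ G, ∃! g : H, g ∈ G ∧
      Q (∑ j ∈ Finset.range m, (inner ℂ (ψ j) g : ℂ) • ψ j) = h := by
    intro h hh
    -- linear map L on G
    let Smap : H →ₗ[ℂ] H :=
      ∑ j ∈ Finset.range m, ((innerSL ℂ (ψ j)).toLinearMap).smulRight (ψ j)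
    have hSmap : ∀ u : H, Smap u = ∑ j ∈ Finset.range m, (inner ℂ (ψ j) u : ℂ) • ψ j := by
      intro u
      simp [Smap, LinearMap.sum_apply]
    let L : G →ₗ[ℂ] G :=
      G.orthogonalProjectionOnto.toLinearMap ∘ₗ Smap ∘ₗ G.subtype
    have hL : ∀ x : G, (L x : H) = Q (∑ j ∈ Finset.range m, (inner ℂ (ψ j) (x : H) : ℂ) • ψ j) := by
      intro x
      simp only [L, LinearMap.comp_apply, ContinuousLinearMap.coe_coe, Submodule.subtype_apply]
      rw [hSmap, hQ]
    have hinj : Function.Injective L := by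
      intro x y hxy
      have h1 : (L (x - y) : H) = 0 := by rw [map_sub, Submodule.coe_sub, sub_eq_zero]; exact congrArg Subtype.val hxy
      have h2 := hpart4 (x - y : G) (x - y : G).2
      rw [← hL] at h2
      rw [h1] at h2
      simp only [norm_zero] at h2
      have : ‖((x - y : G) : H)‖ = 0 := by nlinarith [norm_nonneg ((x - y : G) : H)]
      have : ((x - y : G) : H) = 0 := norm_eq_zero.mp this
      have : x - y = 0 := by exact_mod_cast this
      exact sub_eq_zero.mp this
    have hsurj : Function.Surjective L := (LinearMap.injective_iff_surjective).mp hinj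
    obtain ⟨x, hx⟩ := hsurj ⟨h, hh⟩
    refine ⟨(x : H), ⟨x.2, ?_⟩, ?_⟩
    · rw [← hL x, hx]
    · rintro g' ⟨hg', hQg'⟩
      have : L ⟨g', hg'⟩ = ⟨h, hh⟩ := by
        apply Subtype.ext
        rw [hL ⟨g', hg'⟩]
        exact hQg'
      have := hinj (this.trans hx.symm)
      exact congrArg Subtype.val this
  refine ⟨?_, hpart2, hpart3, hpart4⟩
  intro g hg
  rw [hsumeq g hg]
  exact ⟨hlow' g hg, hup' g⟩
end

section
/- If |⟨φ_l, ψ_j⟩| ≤ c₁(1+|j−l|)^{-s} for all j, l with s > 1/2, and m > n, then B_{m,n} = (1/λ_min(Φ_n)) Σ_{j=m+1}^∞ Σ_{l=1}^n |⟨φ_l, ψ_j⟩|² ≤ (c₁²/(2s−1)) · (1/λ_min(Φ_n)) · n · (m−n)^{−(2s−1)}. -/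
open MeasureTheory Set

/-- Finite partial sums of the shifted rpow tail are bounded by the integral tail. -/
lemma aux_tail_sum (p b : ℝ) (hp : 0 < p) (hb : 1 ≤ b) (k : ℕ) :
    ∑ j ∈ Finset.range k, (b + 1 + (j : ℝ)) ^ (-(p + 1)) ≤ b ^ (-p) / p := by
  have hb0 : 0 < b := by linarith
  have hexp : -(p + 1) < -1 := by linarith
  set f : ℝ → ℝ := fun x => x ^ (-(p + 1)) with hf
  have hanti : AntitoneOn f (Icc b (b + (k : ℝ))) := by
    intro x hx y hy hxy
    exact Real.rpow_le_rpow_of_nonpos (lt_of_lt_of_le hb0 hx.1) hxy (by linarith)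
  have h1 : ∑ j ∈ Finset.range k, f (b + ((j : ℕ) + 1 : ℕ)) ≤ ∫ x in b..b + (k : ℝ), f x :=
    AntitoneOn.sum_le_integral hanti
  have heq : ∑ j ∈ Finset.range k, (b + 1 + (j : ℝ)) ^ (-(p + 1))
      = ∑ j ∈ Finset.range k, f (b + ((j : ℕ) + 1 : ℕ)) := by
    refine Finset.sum_congr rfl fun j _ => ?_
    simp only [hf]
    push_cast
    ring_nf
  have hint : IntegrableOn f (Ioi b) := integrableOn_Ioi_rpow_of_lt hexp hb0
  have h2 : ∫ x in b..b + (k : ℝ), f x ≤ ∫ x in Ioi b, f x := by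
    rw [intervalIntegral.integral_of_le (le_add_of_nonneg_right (Nat.cast_nonneg k))]
    refine setIntegral_mono_set hint ?_ ?_
    · filter_upwards [ae_restrict_mem measurableSet_Ioi] with x hx
      exact Real.rpow_nonneg (le_of_lt (lt_trans hb0 hx)) _
    · exact Filter.Eventually.of_forall fun x hx => hx.1
  have h3 : ∫ x in Ioi b, f x = b ^ (-p) / p := by
    rw [hf, integral_Ioi_rpow_of_lt hexp hb0]
    have : -(p + 1) + 1 = -p := by ring
    rw [this, neg_div, div_neg, neg_neg]
  rw [heq]
  calc _ ≤ ∫ x in b..b + (k : ℝ), f x := h1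
    _ ≤ ∫ x in Ioi b, f x := h2
    _ = b ^ (-p) / p := h3

/-- Lemma 4.3: if `|⟨φ_l, ψ_j⟩| ≤ c₁ (1+|j-l|)^{-s}` with `s > 1/2` and
`m > n`, then `B_{m,n} = (1/λ_min) ∑_{j=m+1}^∞ ∑_{l=1}^n |⟨φ_l, ψ_j⟩|²
≤ (c₁²/(2s-1)) (1/λ_min) n (m-n)^{-(2s-1)}`. (Indices shifted by one.) -/
theorem stmt_11 {H : Type*} [NormedAddCommGroup H] [InnerProductSpace ℂ H]
    (ψ φ : ℕ → H) (c₁ s : ℝ) (hc₁ : 0 < c₁) (hs : 1 / 2 < s)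
    (hcross : ∀ j l : ℕ,
      ‖(inner ℂ (ψ j) (φ l) : ℂ)‖ ≤ c₁ * (1 + |(j : ℝ) - (l : ℝ)|) ^ (-s))
    (n m : ℕ) (hn : 1 ≤ n) (hnm : n < m)
    (lam : ℝ) (hlam : 0 < lam) :
    ((1 / lam) * ∑' j : ℕ, ∑ l ∈ Finset.range n,
        ‖(inner ℂ (ψ (m + j)) (φ l) : ℂ)‖ ^ 2)
      ≤ (c₁ ^ 2 / (2 * s - 1)) * (1 / lam) * (n : ℝ)
          * ((m : ℝ) - (n : ℝ)) ^ (-(2 * s - 1)) := by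
  set p : ℝ := 2 * s - 1 with hpdef
  set b : ℝ := (m : ℝ) - (n : ℝ) with hbdef
  have hp : 0 < p := by simp only [hpdef]; linarith
  have hb : 1 ≤ b := by
    have : (n : ℝ) + 1 ≤ (m : ℝ) := by exact_mod_cast hnm
    simp only [hbdef]; linarith
  have hb0 : 0 < b := by linarith
  -- per-term bound
  have hterm : ∀ j : ℕ, ∀ l ∈ Finset.range n,
      ‖(inner ℂ (ψ (m + j)) (φ l) : ℂ)‖ ^ 2 ≤ c₁ ^ 2 * (b + 1 + (j : ℝ)) ^ (-(p + 1)) := by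
    intro j l hl
    have hl' : (l : ℝ) + 1 ≤ (n : ℝ) := by
      exact_mod_cast Nat.succ_le_of_lt (Finset.mem_range.mp hl)
    set t : ℝ := 1 + |((m + j : ℕ) : ℝ) - (l : ℝ)| with htdef
    have hle : b + 1 + (j : ℝ) ≤ t := by
      rw [htdef, hbdef]
      push_cast
      linarith [le_abs_self ((m : ℝ) + (j : ℝ) - (l : ℝ))]
    have ht0 : (0 : ℝ) < b + 1 + (j : ℝ) := by positivity
    have ht1 : (0 : ℝ) < t := lt_of_lt_of_le ht0 hle
    have h1 : ‖(inner ℂ (ψ (m + j)) (φ l) : ℂ)‖ ^ 2 ≤ (c₁ * t ^ (-s)) ^ 2 :=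
      pow_le_pow_left₀ (norm_nonneg _) (hcross (m + j) l) 2
    have h2 : (c₁ * t ^ (-s)) ^ 2 = c₁ ^ 2 * t ^ (-(p + 1)) := by
      have e : (-s) * ((2 : ℕ) : ℝ) = -(p + 1) := by push_cast; simp only [hpdef]; ring
      rw [mul_pow, ← Real.rpow_natCast (t ^ (-s)) 2, ← Real.rpow_mul ht1.le, e]
    have h3 : t ^ (-(p + 1)) ≤ (b + 1 + (j : ℝ)) ^ (-(p + 1)) :=
      Real.rpow_le_rpow_of_nonpos ht0 hle (by linarith)
    calc _ ≤ (c₁ * t ^ (-s)) ^ 2 := h1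
      _ = c₁ ^ 2 * t ^ (-(p + 1)) := h2
      _ ≤ c₁ ^ 2 * (b + 1 + (j : ℝ)) ^ (-(p + 1)) := by
          exact mul_le_mul_of_nonneg_left h3 (by positivity)
  -- bound the tsum
  have htsum : (∑' j : ℕ, ∑ l ∈ Finset.range n,
      ‖(inner ℂ (ψ (m + j)) (φ l) : ℂ)‖ ^ 2) ≤ (n : ℝ) * c₁ ^ 2 * (b ^ (-p) / p) := by
    apply Real.tsum_le_of_sum_range_le
    · intro j; positivity
    · intro k
      calc ∑ j ∈ Finset.range k, ∑ l ∈ Finset.range n, ‖(inner ℂ (ψ (m + j)) (φ l) : ℂ)‖ ^ 2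
          ≤ ∑ j ∈ Finset.range k, (n : ℝ) * (c₁ ^ 2 * (b + 1 + (j : ℝ)) ^ (-(p + 1))) := by
            refine Finset.sum_le_sum fun j _ => ?_
            calc ∑ l ∈ Finset.range n, ‖(inner ℂ (ψ (m + j)) (φ l) : ℂ)‖ ^ 2
                ≤ ∑ _l ∈ Finset.range n, c₁ ^ 2 * (b + 1 + (j : ℝ)) ^ (-(p + 1)) :=
                  Finset.sum_le_sum (hterm j)
              _ = (n : ℝ) * (c₁ ^ 2 * (b + 1 + (j : ℝ)) ^ (-(p + 1))) := by
                  rw [Finset.sum_const, Finset.card_range, nsmul_eq_mul]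
        _ = (n : ℝ) * c₁ ^ 2 * ∑ j ∈ Finset.range k, (b + 1 + (j : ℝ)) ^ (-(p + 1)) := by
            rw [Finset.mul_sum]
            exact Finset.sum_congr rfl fun j _ => by ring
        _ ≤ (n : ℝ) * c₁ ^ 2 * (b ^ (-p) / p) := by
            refine mul_le_mul_of_nonneg_left (aux_tail_sum p b hp hb k) (by positivity)
  calc (1 / lam) * ∑' j : ℕ, ∑ l ∈ Finset.range n, ‖(inner ℂ (ψ (m + j)) (φ l) : ℂ)‖ ^ 2
      ≤ (1 / lam) * ((n : ℝ) * c₁ ^ 2 * (b ^ (-p) / p)) :=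
        mul_le_mul_of_nonneg_left htsum (by positivity)
    _ = (c₁ ^ 2 / p) * (1 / lam) * (n : ℝ) * b ^ (-p) := by ring
end

section
/- Let S be the frame operator of a frame {ψ_j} with lower bound A, let Q_n be the orthogonal projection onto G_n, and let W_n = Q_n S_m |_{G_n} be invertible with ‖S − W_n‖ ≤ B_{m,n} < A on G_n and ‖W_n^{-1}‖ ≤ 1/(A − B_{m,n}). Then for every f ∈ H, ‖S^{-1}f − W_n^{-1}Q_n f‖ ≤ (1/A)‖f − Q_n f‖ + (1/A)·(B_{m,n}/(A − B_{m,n}))·‖f‖. -/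
/-- error decomposition (4.8) with Lemmas 4.1–4.2. Here `Sinv = S⁻¹` with
`‖S⁻¹‖ ≤ 1/A`, `Q` is the orthogonal projection onto `G_n`, `Sm` is the partial frame
operator, `T = W_n⁻¹ Q_n` (characterized by `T f ∈ G_n`, `Q(S_m(T f)) = Q f`, and the bound
`‖T f‖ ≤ (1/(A - B_{m,n})) ‖Q f‖`), and `‖(S - W_n) g‖ ≤ B_{m,n} ‖g‖` on `G_n`.  Then
`‖S⁻¹ f - W_n⁻¹ Q_n f‖ ≤ (1/A) ‖f - Q_n f‖ + (1/A)(B_{m,n}/(A - B_{m,n})) ‖f‖`. -/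
theorem stmt_12 {H : Type*} [NormedAddCommGroup H] [InnerProductSpace ℂ H]
    [CompleteSpace H]
    (Gn : Submodule ℂ H)
    (S Sinv : H →L[ℂ] H)
    (hSinv₁ : ∀ f, Sinv (S f) = f) (hSinv₂ : ∀ f, S (Sinv f) = f)
    (A : ℝ) (hA : 0 < A) (hSinvnorm : ∀ f, ‖Sinv f‖ ≤ (1 / A) * ‖f‖)
    (Q : H → H) (hQmem : ∀ g, Q g ∈ Gn)
    (hQorth : ∀ g, ∀ h ∈ Gn, (inner ℂ (g - Q g) h : ℂ) = 0)
    (Sm : H →L[ℂ] H)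
    (Bmn : ℝ) (hBmn0 : 0 ≤ Bmn) (hBmnA : Bmn < A)
    (hSW : ∀ g ∈ Gn, ‖S g - Q (Sm g)‖ ≤ Bmn * ‖g‖)
    (T : H → H) (hTmem : ∀ f, T f ∈ Gn)
    (hTinv : ∀ f, Q (Sm (T f)) = Q f)
    (hTnorm : ∀ f, ‖T f‖ ≤ (1 / (A - Bmn)) * ‖Q f‖) :
    ∀ f : H, ‖Sinv f - T f‖
      ≤ (1 / A) * ‖f - Q f‖ + (1 / A) * (Bmn / (A - Bmn)) * ‖f‖ := by
  intro f
  have hAB : 0 < A - Bmn := sub_pos.mpr hBmnA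
  -- Q f has norm ≤ ‖f‖
  have hQle : ‖Q f‖ ≤ ‖f‖ := by
    have horth : (inner ℂ (f - Q f) (Q f) : ℂ) = 0 := hQorth f (Q f) (hQmem f)
    have hre : RCLike.re (inner ℂ (f - Q f) (Q f) : ℂ) = 0 := by rw [horth]; simp
    have hsq : ‖(f - Q f) + Q f‖ ^ 2 = ‖f - Q f‖ ^ 2 + ‖Q f‖ ^ 2 := by
      rw [@norm_add_sq ℂ, hre]; ring
    have hfe : (f - Q f) + Q f = f := by abel
    rw [hfe] at hsq
    nlinarith [norm_nonneg (f - Q f), norm_nonneg (Q f), norm_nonneg f]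
  -- key decomposition
  have key : Sinv f - T f = Sinv ((f - Q f) - (S (T f) - Q (Sm (T f)))) := by
    rw [hTinv f]
    have : (f - Q f) - (S (T f) - Q f) = f - S (T f) := by abel
    rw [this, map_sub, hSinv₁]
  rw [key]
  have h1 : ‖Sinv ((f - Q f) - (S (T f) - Q (Sm (T f))))‖
      ≤ (1 / A) * ‖(f - Q f) - (S (T f) - Q (Sm (T f)))‖ := hSinvnorm _
  have h2 : ‖(f - Q f) - (S (T f) - Q (Sm (T f)))‖
      ≤ ‖f - Q f‖ + Bmn * ‖T f‖ := by
    calc ‖(f - Q f) - (S (T f) - Q (Sm (T f)))‖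
        ≤ ‖f - Q f‖ + ‖S (T f) - Q (Sm (T f))‖ := norm_sub_le _ _
      _ ≤ ‖f - Q f‖ + Bmn * ‖T f‖ := by
          have := hSW (T f) (hTmem f)
          linarith
  have h3 : ‖T f‖ ≤ (1 / (A - Bmn)) * ‖f‖ := by
    have := hTnorm f
    have h4 : (1 / (A - Bmn)) * ‖Q f‖ ≤ (1 / (A - Bmn)) * ‖f‖ :=
      mul_le_mul_of_nonneg_left hQle (by positivity)
    linarith
  have hApos : (0:ℝ) < 1 / A := by positivity
  calc ‖Sinv ((f - Q f) - (S (T f) - Q (Sm (T f))))‖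
      ≤ (1 / A) * (‖f - Q f‖ + Bmn * ‖T f‖) := by
        refine le_trans h1 (mul_le_mul_of_nonneg_left h2 hApos.le)
    _ ≤ (1 / A) * (‖f - Q f‖ + Bmn * ((1 / (A - Bmn)) * ‖f‖)) := by
        have : Bmn * ‖T f‖ ≤ Bmn * ((1 / (A - Bmn)) * ‖f‖) :=
          mul_le_mul_of_nonneg_left h3 hBmn0
        nlinarith
    _ = (1 / A) * ‖f - Q f‖ + (1 / A) * (Bmn / (A - Bmn)) * ‖f‖ := by
        field_simp
end

section
/- Let W_n = Q_n S_m|_{G_n} be invertible on G_n with ‖W_n^{-1}‖ ≤ 2/A, where S_m has operator norm at most B, and define f_{n,m} = W_n^{-1} Q_n S_m f. Then ‖f − f_{n,m}‖ ≤ (1 + 2B/A)·‖f − Q_n f‖. -/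
/-- if `W_n = Q_n S_m|_{G_n}` is invertible with `‖W_n⁻¹‖ ≤ 2/A`
(encoded by `‖g‖ ≤ (2/A) ‖Q(S_m g)‖` for `g ∈ G_n`), `‖S_m‖ ≤ B`, and
`f_{n,m} = W_n⁻¹ Q_n S_m f` (encoded by `f_{n,m} ∈ G_n` and
`Q(S_m f_{n,m}) = Q(S_m f)`), then `‖f - f_{n,m}‖ ≤ (1 + 2B/A) ‖f - Q_n f‖`. -/
theorem stmt_13 {H : Type*} [NormedAddCommGroup H] [InnerProductSpace ℂ H]
    [CompleteSpace H]
    (Gn : Submodule ℂ H)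
    (Q : H → H) (hQmem : ∀ g, Q g ∈ Gn)
    (hQorth : ∀ g, ∀ h ∈ Gn, (inner ℂ (g - Q g) h : ℂ) = 0)
    (Sm : H →L[ℂ] H) (A B : ℝ) (hA : 0 < A) (hB : 0 < B)
    (hSm : ∀ g : H, ‖Sm g‖ ≤ B * ‖g‖)
    (hWinv : ∀ g ∈ Gn, ‖g‖ ≤ (2 / A) * ‖Q (Sm g)‖)
    (f fnm : H) (hfnm_mem : fnm ∈ Gn)
    (hfnm : Q (Sm fnm) = Q (Sm f)) :
    ‖f - fnm‖ ≤ (1 + 2 * B / A) * ‖f - Q f‖ := by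
  -- uniqueness of the orthogonal projection
  have uniq : ∀ x a, a ∈ Gn → (∀ h ∈ Gn, (inner ℂ (x - a) h : ℂ) = 0) → a = Q x := by
    intro x a ha horth
    have hmem : a - Q x ∈ Gn := Submodule.sub_mem _ ha (hQmem x)
    have h1 := horth (a - Q x) hmem
    have h2 := hQorth x (a - Q x) hmem
    have h3 : (inner ℂ (a - Q x) (a - Q x) : ℂ) = 0 := by
      have : (inner ℂ ((x - Q x) - (x - a)) (a - Q x) : ℂ) = 0 := by
        rw [inner_sub_left, h1, h2, sub_zero]
      simpa [sub_sub_sub_cancel_left] using this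
    exact sub_eq_zero.mp (inner_self_eq_zero.mp h3)
  have Qsub : ∀ x y, Q (x - y) = Q x - Q y := by
    intro x y
    refine (uniq (x - y) (Q x - Q y) (Submodule.sub_mem _ (hQmem x) (hQmem y)) ?_).symm
    intro h hh
    have e1 := hQorth x h hh
    have e2 := hQorth y h hh
    have : (inner ℂ ((x - Q x) - (y - Q y)) h : ℂ) = 0 := by
      rw [inner_sub_left, e1, e2, sub_zero]
    convert this using 2
    abel
  -- contraction property of Q
  have Qnorm : ∀ x, ‖Q x‖ ≤ ‖x‖ := by
    intro x
    have horth : (inner ℂ (x - Q x) (Q x) : ℂ) = 0 := hQorth x (Q x) (hQmem x)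
    have := norm_add_sq_eq_norm_sq_add_norm_sq_of_inner_eq_zero (x - Q x) (Q x) horth
    have hx : (x - Q x) + Q x = x := by abel
    rw [hx] at this
    nlinarith [norm_nonneg (x - Q x), norm_nonneg (Q x), norm_nonneg x]
  -- main estimate
  have hmem : Q f - fnm ∈ Gn := Submodule.sub_mem _ (hQmem f) hfnm_mem
  have key : ‖Q f - fnm‖ ≤ (2 / A) * ‖Q (Sm (Q f - fnm))‖ := hWinv _ hmem
  have heq : Q (Sm (Q f - fnm)) = Q (Sm (Q f - f)) := by
    rw [map_sub, map_sub, Qsub, Qsub, hfnm]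
  rw [heq] at key
  have h4 : ‖Q (Sm (Q f - f))‖ ≤ B * ‖f - Q f‖ := by
    calc ‖Q (Sm (Q f - f))‖ ≤ ‖Sm (Q f - f)‖ := Qnorm _
    _ ≤ B * ‖Q f - f‖ := hSm _
    _ = B * ‖f - Q f‖ := by rw [norm_sub_rev]
  have h5 : ‖Q f - fnm‖ ≤ (2 * B / A) * ‖f - Q f‖ := by
    calc ‖Q f - fnm‖ ≤ (2 / A) * ‖Q (Sm (Q f - f))‖ := key
    _ ≤ (2 / A) * (B * ‖f - Q f‖) := by
        apply mul_le_mul_of_nonneg_left h4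
        positivity
    _ = (2 * B / A) * ‖f - Q f‖ := by ring
  calc ‖f - fnm‖ = ‖(f - Q f) + (Q f - fnm)‖ := by rw [sub_add_sub_cancel]
  _ ≤ ‖f - Q f‖ + ‖Q f - fnm‖ := norm_add_le _ _
  _ ≤ ‖f - Q f‖ + (2 * B / A) * ‖f - Q f‖ := by linarith
  _ = (1 + 2 * B / A) * ‖f - Q f‖ := by ring
end
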